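/- For p ≥ 1, the smallest signless p-Laplacian eigenvalue satisfies (2/Δ)^{p-1}·(ψ(G)/p)^p ≤ q_p(G), where Δ is the maximum degree of G. -/

import Mathlib

open Finset

variable {V : Type*}

/-- Signless p-Laplacian form: `Q_p(x) = Σ_{{i,j}∈E} |x_i + x_j|^p`. -/
noncomputable def Qp [Fintype V] (G : SimpleGraph V) [Fintype G.edgeSet] (p : ℝ)
    (x : V → ℝ) : ℝ :=
  ∑ e ∈ G.edgeFinset,
    Sym2.lift ⟨fun i j => |x i + x j| ^ p, fun i j => by simp [add_comm]⟩ e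

/-- The p-norm unit sphere condition. -/
def unitSphere [Fintype V] (p : ℝ) (x : V → ℝ) : Prop := ∑ i, |x i| ^ p = 1

/-- Smallest signless p-Laplacian eigenvalue. -/
noncomputable def qp [Fintype V] (G : SimpleGraph V) [Fintype G.edgeSet] (p : ℝ) : ℝ :=
  sInf {r | ∃ x : V → ℝ, unitSphere p x ∧ Qp G p x = r}

/-- Largest signless p-Laplacian eigenvalue. -/
noncomputable def lamp [Fintype V] (G : SimpleGraph V) [Fintype G.edgeSet] (p : ℝ) : ℝ :=
  sSup {r | ∃ x : V → ℝ, unitSphere p x ∧ Qp G p x = r}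

open Classical in
/-- Number of edges with both endpoints in `S`. -/
noncomputable def eIn [Fintype V] (G : SimpleGraph V) [Fintype G.edgeSet] (S : Finset V) : ℕ :=
  (G.edgeFinset.filter fun e => ∀ v ∈ e, v ∈ S).card

open Classical in
/-- Number of edges with exactly one endpoint in `U`. -/
noncomputable def cutN [Fintype V] (G : SimpleGraph V) [Fintype G.edgeSet] (U : Finset V) : ℕ :=
  (G.edgeFinset.filter fun e => (∃ v ∈ e, v ∈ U) ∧ (∃ w ∈ e, w ∉ U)).card

/-- Desai–Rao bipartiteness parameter ψ(G). -/
noncomputable def psi [Fintype V] [DecidableEq V] (G : SimpleGraph V) [Fintype G.edgeSet] : ℝ :=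
  sInf {r | ∃ S T : Finset V, Disjoint S T ∧ (S ∪ T).Nonempty ∧
    r = (2 * eIn G S + 2 * eIn G T + cutN G (S ∪ T)) / (S ∪ T).card}

open Classical in
/-- `h_g(U)`: min over thresholds `0 ≤ t < max g` of `cut(C_t)/|C_t|` where `C_t = {i : g i > t}`. -/
noncomputable def hgC [Fintype V] [DecidableEq V] (G : SimpleGraph V) [Fintype G.edgeSet]
    (g : V → ℝ) : ℝ :=
  sInf {r | ∃ t : ℝ, 0 ≤ t ∧ t < sSup (Set.range g) ∧
    r = (cutN G (univ.filter fun i => t < g i) : ℝ) / (univ.filter fun i => t < g i).card}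

/-- Eigenpair of the signless p-Laplacian. -/
def IsEigenpair [Fintype V] (G : SimpleGraph V) [DecidableRel G.Adj] (p : ℝ)
    (x : V → ℝ) (μ : ℝ) : Prop :=
  ∀ k, ∑ j ∈ G.neighborFinset k, Real.sign (x k + x j) * |x k + x j| ^ (p - 1)
      = μ * (Real.sign (x k) * |x k| ^ (p - 1))

/-- Vertex bipartiteness: minimum number of vertices to delete to make `G` bipartite. -/
noncomputable def nuG [Fintype V] [DecidableEq V] (G : SimpleGraph V) : ℕ :=
  sInf {k | ∃ S : Finset V, S.card = k ∧ ((SimpleGraph.induce ((↑S : Set V)ᶜ) G).Colorable 2)}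

section AnalyticCore

open Real Set

private lemma cont_rpow_aux {r : ℝ} (hr : 0 ≤ r) : Continuous fun t : ℝ => t ^ r :=
  continuous_iff_continuousAt.mpr fun t => Real.continuousAt_rpow_const t r (Or.inr hr)

private lemma two_rpow_le_self {p : ℝ} (hp : 1 ≤ p) : (2:ℝ) ^ ((p-1)/p) ≤ p := by
  have hp0 : 0 < p := lt_of_lt_of_le one_pos hp
  have hlog2 : Real.log 2 ≤ 1 := by
    have := Real.log_le_sub_one_of_pos (by norm_num : (0:ℝ) < 2); linarith
  have h2 : 1 - 1/p ≤ Real.log p := by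
    have h := Real.log_le_sub_one_of_pos (by positivity : (0:ℝ) < 1/p)
    rw [Real.log_div one_ne_zero (ne_of_gt hp0), Real.log_one] at h
    linarith
  have h1 : (p - 1) * Real.log 2 ≤ p * Real.log p := by
    have ha : (p-1) * Real.log 2 ≤ p - 1 := by
      nlinarith [Real.log_nonneg (by norm_num : (1:ℝ) ≤ 2)]
    have hb : p - 1 ≤ p * Real.log p := by
      have := mul_le_mul_of_nonneg_left h2 hp0.le
      calc p - 1 = p * (1 - 1/p) := by field_simp
        _ ≤ p * Real.log p := this
    linarith
  have h3 : (p-1)/p * Real.log 2 ≤ Real.log p := by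
    rw [div_mul_eq_mul_div, div_le_iff₀ hp0]
    linarith [h1]
  calc (2:ℝ) ^ ((p-1)/p) = Real.exp (Real.log 2 * ((p-1)/p)) := by
        rw [Real.rpow_def_of_pos (by norm_num : (0:ℝ) < 2)]
    _ ≤ Real.exp (Real.log p) := by
        apply Real.exp_le_exp.mpr; rw [mul_comm]; exact h3
    _ = p := Real.exp_log hp0

private lemma rpow_add_le_add_rpow {p A B : ℝ} (hp : 1 ≤ p) (hA : 0 ≤ A) (hB : 0 ≤ B) :
    A ^ p + B ^ p ≤ (A + B) ^ p := by
  have := NNReal.add_rpow_le_rpow_add (⟨A, hA⟩ : NNReal) (⟨B, hB⟩ : NNReal) hp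
  have h2 := NNReal.coe_le_coe.mpr this
  push_cast at h2
  convert h2 using 2 <;> rfl

private lemma same_sign_core {p A B : ℝ} (hp : 1 ≤ p) (hA : 0 ≤ A) (hB : 0 ≤ B) :
    A ^ p + B ^ p ≤ p * (A + B) * ((A ^ p + B ^ p)/2) ^ ((p-1)/p) := by
  have hp0 : 0 < p := lt_of_lt_of_le one_pos hp
  have hApn : 0 ≤ A ^ p := Real.rpow_nonneg hA p
  have hBpn : 0 ≤ B ^ p := Real.rpow_nonneg hB p
  set S := A ^ p + B ^ p with hSdef
  have hSnn : 0 ≤ S := by positivity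
  rcases eq_or_lt_of_le hSnn with h0 | hSpos
  · rw [← h0]
    have : (0:ℝ) ≤ p * (A + B) * ((0:ℝ)/2) ^ ((p-1)/p) := by
      apply mul_nonneg (mul_nonneg hp0.le (by linarith)) (Real.rpow_nonneg (by norm_num) _)
    simpa using this
  · have h1 : S ^ (1/p) ≤ A + B := by
      have hle : S ≤ (A+B)^p := rpow_add_le_add_rpow hp hA hB
      calc S ^ (1/p) ≤ ((A+B)^p) ^ (1/p) :=
            Real.rpow_le_rpow hSnn hle (by positivity)
        _ = A + B := by
            rw [← Real.rpow_mul (by linarith), mul_one_div, div_self hp0.ne', Real.rpow_one]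
    have h2 : S = S ^ ((p-1)/p) * S ^ (1/p) := by
      rw [← Real.rpow_add hSpos, ← add_div, sub_add_cancel, div_self hp0.ne',
        Real.rpow_one]
    have h3 : S ^ ((p-1)/p) = 2 ^ ((p-1)/p) * (S/2) ^ ((p-1)/p) := by
      rw [← Real.mul_rpow (by norm_num) (by positivity)]
      congr 1
      ring
    have hABnn : 0 ≤ A + B := by linarith
    calc S = S ^ ((p-1)/p) * S ^ (1/p) := h2
      _ ≤ S ^ ((p-1)/p) * (A+B) := by
          exact mul_le_mul_of_nonneg_left h1 (Real.rpow_nonneg hSnn _)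
      _ = 2 ^ ((p-1)/p) * (S/2) ^ ((p-1)/p) * (A+B) := by rw [← h3]
      _ ≤ p * (S/2) ^ ((p-1)/p) * (A+B) := by
          apply mul_le_mul_of_nonneg_right _ hABnn
          exact mul_le_mul_of_nonneg_right (two_rpow_le_self hp)
            (Real.rpow_nonneg (by positivity) _)
      _ = p * (A + B) * (S/2) ^ ((p-1)/p) := by ring

private lemma pm_one {p A B : ℝ} (hp : 1 ≤ p) (hA : 0 ≤ A) (hB : 0 ≤ B) :
    ((A + B)/2) ^ (p - 1) ≤ ((A ^ p + B ^ p)/2) ^ ((p-1)/p) := by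
  have hp0 : 0 < p := lt_of_lt_of_le one_pos hp
  have hmid : ((A+B)/2) ^ p ≤ (A ^ p + B ^ p)/2 := by
    have h := (convexOn_rpow hp).2 (Set.mem_Ici.mpr hA) (Set.mem_Ici.mpr hB)
      (by norm_num : (0:ℝ) ≤ 1/2) (by norm_num : (0:ℝ) ≤ 1/2) (by norm_num)
    simp only [smul_eq_mul] at h
    have e1 : (1/2 : ℝ) * A + (1/2 : ℝ) * B = (A+B)/2 := by ring
    have e2 : (1/2 : ℝ) * A^p + (1/2 : ℝ) * B^p = (A^p+B^p)/2 := by ring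
    rw [e1, e2] at h
    exact h
  calc ((A+B)/2) ^ (p-1) = (((A+B)/2) ^ p) ^ ((p-1)/p) := by
        rw [← Real.rpow_mul (by positivity)]
        congr 1
        field_simp
    _ ≤ ((A^p+B^p)/2) ^ ((p-1)/p) :=
        Real.rpow_le_rpow (Real.rpow_nonneg (by positivity) _) hmid
          (div_nonneg (by linarith) hp0.le)

private lemma pm_two {p A B : ℝ} (hp : 2 ≤ p) (hA : 0 ≤ A) (hB : 0 ≤ B) :
    (A ^ (p-1) + B ^ (p-1))/2 ≤ ((A ^ p + B ^ p)/2) ^ ((p-1)/p) := by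
  have hp0 : 0 < p := by linarith
  have hps : (0:ℝ) < p - 1 := by linarith
  have hq : 1 ≤ p / (p-1) := by
    rw [le_div_iff₀ hps]; linarith
  have hC : 0 ≤ A ^ (p-1) := Real.rpow_nonneg hA _
  have hD : 0 ≤ B ^ (p-1) := Real.rpow_nonneg hB _
  have hCp : (A ^ (p-1)) ^ (p/(p-1)) = A ^ p := by
    rw [← Real.rpow_mul hA]
    congr 1
    field_simp
  have hDp : (B ^ (p-1)) ^ (p/(p-1)) = B ^ p := by
    rw [← Real.rpow_mul hB]
    congr 1
    field_simp
  have hconv := (convexOn_rpow hq).2 (Set.mem_Ici.mpr hC) (Set.mem_Ici.mpr hD)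
    (by norm_num : (0:ℝ) ≤ 1/2) (by norm_num : (0:ℝ) ≤ 1/2) (by norm_num)
  simp only [smul_eq_mul] at hconv
  have e1 : (1/2 : ℝ) * (A ^ (p-1)) + (1/2 : ℝ) * (B ^ (p-1)) = (A^(p-1)+B^(p-1))/2 := by ring
  rw [e1, hCp, hDp] at hconv
  have e2 : (1/2 : ℝ) * (A ^ p) + (1/2 : ℝ) * (B ^ p) = (A^p+B^p)/2 := by ring
  rw [e2] at hconv
  calc (A^(p-1)+B^(p-1))/2
      = (((A^(p-1)+B^(p-1))/2) ^ (p/(p-1))) ^ ((p-1)/p) := by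
        rw [← Real.rpow_mul (by positivity)]
        rw [div_mul_div_comm, mul_comm p (p-1), div_self (by positivity), Real.rpow_one]
    _ ≤ ((A^p+B^p)/2) ^ ((p-1)/p) :=
        Real.rpow_le_rpow (Real.rpow_nonneg (by positivity) _) hconv
          (div_nonneg hps.le hp0.le)


section HH

open Real Set MeasureTheory intervalIntegral

private lemma cont_rpow_aux' {r : ℝ} (hr : 0 ≤ r) : Continuous fun t : ℝ => t ^ r :=
  continuous_iff_continuousAt.mpr fun t => Real.continuousAt_rpow_const t r (Or.inr hr)

private lemma concave_rpow_aux {r : ℝ} (h0 : 0 ≤ r) (h1 : r ≤ 1) :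
    ConcaveOn ℝ (Set.Ici 0) fun t : ℝ => t ^ r := by
  rcases eq_or_lt_of_le h0 with rfl | h0'
  · have : (fun t : ℝ => t ^ (0:ℝ)) = fun _ : ℝ => (1:ℝ) := by
      funext t; exact Real.rpow_zero t
    rw [this]
    exact concaveOn_const _ (convex_Ici 0)
  rcases eq_or_lt_of_le h1 with rfl | h1'
  · have : (fun t : ℝ => t ^ (1:ℝ)) = fun t : ℝ => t := by
      funext t; exact Real.rpow_one t
    rw [this]
    exact concaveOn_id (convex_Ici 0)
  · exact (Real.strictConcaveOn_rpow h0' h1').concaveOn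

private lemma rpow_integral_id {p A B : ℝ} (hp : 1 ≤ p) :
    ∫ t in B..A, t ^ (p-1) = (A ^ p - B ^ p)/p := by
  have h : p - 1 + 1 = p := by ring
  rw [integral_rpow (Or.inl (by linarith : (-1:ℝ) < p - 1)), h]

private lemma hh_concave {p A B : ℝ} (hp : 1 ≤ p) (hp2 : p ≤ 2) (hB : 0 ≤ B) (hAB : B ≤ A) :
    A ^ p - B ^ p ≤ p * (A - B) * ((A + B)/2) ^ (p-1) := by
  have hA : 0 ≤ A := le_trans hB hAB
  have hp0 : 0 < p := lt_of_lt_of_le one_pos hp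
  rcases eq_or_lt_of_le hAB with rfl | hlt
  · simp
  have hcont : Continuous fun t : ℝ => t ^ (p-1) := cont_rpow_aux' (by linarith)
  have hint : IntervalIntegrable (fun t : ℝ => t ^ (p-1)) volume B A :=
    hcont.intervalIntegrable B A
  have hcont2 : Continuous fun t : ℝ => ((A+B) - t) ^ (p-1) :=
    hcont.comp (continuous_const.sub continuous_id)
  have hint2 : IntervalIntegrable (fun t : ℝ => ((A+B) - t) ^ (p-1)) volume B A :=
    hcont2.intervalIntegrable B A
  have hrefl : (∫ t in B..A, ((A + B) - t) ^ (p-1)) = ∫ t in B..A, t ^ (p-1) := by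
    rw [intervalIntegral.integral_comp_sub_left (fun t => t ^ (p-1)) (A+B)]
    norm_num
  have hpoint : ∀ t ∈ Set.Icc B A,
      t ^ (p-1) + ((A+B) - t) ^ (p-1) ≤ 2 * (((A+B)/2) ^ (p-1)) := by
    intro t ht
    have h1 : t ∈ Set.Ici (0:ℝ) := Set.mem_Ici.mpr (le_trans hB ht.1)
    have h2 : (A+B) - t ∈ Set.Ici (0:ℝ) := Set.mem_Ici.mpr (by
      have := ht.2; linarith)
    have h := (concave_rpow_aux (by linarith : (0:ℝ) ≤ p - 1) (by linarith)).2 h1 h2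
      (by norm_num : (0:ℝ) ≤ 1/2) (by norm_num : (0:ℝ) ≤ 1/2) (by norm_num)
    simp only [smul_eq_mul] at h
    have e1 : (1/2 : ℝ) * t + (1/2 : ℝ) * ((A+B) - t) = (A+B)/2 := by ring
    rw [e1] at h
    linarith
  have hIle : (∫ t in B..A, (t ^ (p-1) + ((A+B) - t) ^ (p-1))) ≤
      ∫ t in B..A, (2 * (((A+B)/2) ^ (p-1)) : ℝ) := by
    apply intervalIntegral.integral_mono_on hlt.le (hint.add hint2)
      (intervalIntegrable_const) hpoint
  rw [intervalIntegral.integral_add hint hint2, hrefl,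
    intervalIntegral.integral_const] at hIle
  have hI : (∫ t in B..A, t ^ (p-1)) ≤ (A - B) * ((A+B)/2) ^ (p-1) := by
    simp only [smul_eq_mul] at hIle
    linarith
  have hid : A ^ p - B ^ p = p * ∫ t in B..A, t ^ (p-1) := by
    rw [rpow_integral_id hp]; field_simp
  rw [hid, mul_assoc]
  exact mul_le_mul_of_nonneg_left hI hp0.le

private lemma hh_convex {p A B : ℝ} (hp : 2 ≤ p) (hB : 0 ≤ B) (hAB : B ≤ A) :
    A ^ p - B ^ p ≤ p * (A - B) * ((A ^ (p-1) + B ^ (p-1))/2) := by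
  have hA : 0 ≤ A := le_trans hB hAB
  have hp0 : 0 < p := by linarith
  rcases eq_or_lt_of_le hAB with rfl | hlt
  · simp
  have hr1 : 1 ≤ p - 1 := by linarith
  have hcont : Continuous fun t : ℝ => t ^ (p-1) := cont_rpow_aux' (by linarith)
  have hint : IntervalIntegrable (fun t : ℝ => t ^ (p-1)) volume B A :=
    hcont.intervalIntegrable B A
  set c : ℝ := (A ^ (p-1) - B ^ (p-1))/(A - B) with hc
  have hlin : Continuous fun t : ℝ => B ^ (p-1) + (t - B) * c :=
    continuous_const.add ((continuous_id.sub continuous_const).mul continuous_const)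
  have hpoint : ∀ t ∈ Set.Icc B A, t ^ (p-1) ≤ B ^ (p-1) + (t - B) * c := by
    intro t ht
    have hABpos : 0 < A - B := by linarith [hlt]
    have hlam : (0:ℝ) ≤ (A - t)/(A - B) := div_nonneg (by linarith [ht.2]) hABpos.le
    have hmu : (0:ℝ) ≤ (t - B)/(A - B) := div_nonneg (by linarith [ht.1]) hABpos.le
    have hsum : (A - t)/(A - B) + (t - B)/(A - B) = 1 := by
      field_simp; ring
    have h := (convexOn_rpow hr1).2 (Set.mem_Ici.mpr hB) (Set.mem_Ici.mpr hA) hlam hmu hsum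
    simp only [smul_eq_mul] at h
    have e1 : (A - t)/(A - B) * B + (t - B)/(A - B) * A = t := by
      field_simp; ring
    rw [e1] at h
    calc t ^ (p-1) ≤ (A - t)/(A - B) * B ^ (p-1) + (t - B)/(A - B) * A ^ (p-1) := h
      _ = B ^ (p-1) + (t - B) * c := by
          rw [hc]; field_simp; ring
  have hI : (∫ t in B..A, t ^ (p-1)) ≤ ∫ t in B..A, (B ^ (p-1) + (t - B) * c) := by
    apply intervalIntegral.integral_mono_on hlt.le hint (hlin.intervalIntegrable B A) hpoint
  have hlinval : (∫ t in B..A, (B ^ (p-1) + (t - B) * c)) = (A - B) * ((A^(p-1) + B^(p-1))/2) := by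
    have i1 : IntervalIntegrable (fun _ : ℝ => B ^ (p-1)) volume B A := intervalIntegrable_const
    have i2 : IntervalIntegrable (fun t : ℝ => (t - B) * c) volume B A :=
      (((continuous_id.sub continuous_const).mul continuous_const)).intervalIntegrable B A
    rw [intervalIntegral.integral_add i1 i2]
    have e2 : (∫ t in B..A, (t - B) * c) = ((A^2 - B^2)/2 - B * (A - B)) * c := by
      rw [intervalIntegral.integral_mul_const]
      congr 1
      rw [intervalIntegral.integral_sub (intervalIntegrable_id) intervalIntegrable_const,
        integral_id, intervalIntegral.integral_const]
      simp only [smul_eq_mul]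
      ring
    rw [e2, intervalIntegral.integral_const]
    simp only [smul_eq_mul]
    rw [hc]
    have hABne : A - B ≠ 0 := sub_ne_zero.mpr hlt.ne'
    field_simp
    ring
  have hid : A ^ p - B ^ p = p * ∫ t in B..A, t ^ (p-1) := by
    rw [rpow_integral_id (by linarith)]; field_simp
  rw [hid, mul_assoc]
  rw [hlinval] at hI
  exact mul_le_mul_of_nonneg_left hI hp0.le


section EdgeCore

open Real Set

private lemma diff_core {p A B : ℝ} (hp : 1 ≤ p) (hB : 0 ≤ B) (hAB : B ≤ A) :
    A ^ p - B ^ p ≤ p * (A - B) * ((A ^ p + B ^ p)/2) ^ ((p-1)/p) := by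
  have hA : 0 ≤ A := le_trans hB hAB
  have hfac : 0 ≤ p * (A - B) := mul_nonneg (by linarith) (by linarith)
  rcases le_total p 2 with h2 | h2
  · calc A ^ p - B ^ p ≤ p * (A - B) * ((A + B)/2) ^ (p-1) := hh_concave hp h2 hB hAB
      _ ≤ p * (A - B) * ((A ^ p + B ^ p)/2) ^ ((p-1)/p) :=
        mul_le_mul_of_nonneg_left (pm_one hp hA hB) hfac
  · calc A ^ p - B ^ p ≤ p * (A - B) * ((A ^ (p-1) + B ^ (p-1))/2) := hh_convex h2 hB hAB
      _ ≤ p * (A - B) * ((A ^ p + B ^ p)/2) ^ ((p-1)/p) :=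
        mul_le_mul_of_nonneg_left (pm_two h2 hA hB) hfac

private lemma abs_diff_core {p A B : ℝ} (hp : 1 ≤ p) (hA : 0 ≤ A) (hB : 0 ≤ B) :
    |A ^ p - B ^ p| ≤ p * |A - B| * ((A ^ p + B ^ p)/2) ^ ((p-1)/p) := by
  rcases le_total B A with h | h
  · have h1 : B ^ p ≤ A ^ p := Real.rpow_le_rpow hB h (by linarith)
    rw [abs_of_nonneg (by linarith), abs_of_nonneg (by linarith)]
    exact diff_core hp hB h
  · have h1 : A ^ p ≤ B ^ p := Real.rpow_le_rpow hA h (by linarith)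
    rw [abs_of_nonpos (by linarith), abs_of_nonpos (by linarith), neg_sub, neg_sub]
    have := diff_core hp hA h
    calc B ^ p - A ^ p ≤ p * (B - A) * ((B ^ p + A ^ p)/2) ^ ((p-1)/p) := this
      _ = p * (B - A) * ((A ^ p + B ^ p)/2) ^ ((p-1)/p) := by rw [add_comm (B ^ p)]

private lemma sign_mul_abs_rpow_of_nonneg {p w : ℝ} (hp : 1 ≤ p) (hw : 0 ≤ w) :
    Real.sign w * |w| ^ p = w ^ p := by
  rcases eq_or_lt_of_le hw with rfl | hw'
  · rw [Real.sign_zero, zero_mul, Real.zero_rpow (by linarith : p ≠ 0)]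
  · rw [Real.sign_of_pos hw', one_mul, abs_of_nonneg hw]

private lemma sign_mul_abs_rpow_of_nonpos {p w : ℝ} (hp : 1 ≤ p) (hw : w ≤ 0) :
    Real.sign w * |w| ^ p = -((-w) ^ p) := by
  rcases eq_or_lt_of_le hw with rfl | hw'
  · rw [Real.sign_zero, zero_mul, neg_zero, Real.zero_rpow (by linarith : p ≠ 0), neg_zero]
  · rw [Real.sign_of_neg hw', abs_of_nonpos hw]
    ring

private lemma edge_core {p : ℝ} (hp : 1 ≤ p) (u v : ℝ) :
    |Real.sign u * |u| ^ p + Real.sign v * |v| ^ p| ≤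
      p * |u + v| * ((|u| ^ p + |v| ^ p)/2) ^ ((p-1)/p) := by
  rcases le_total 0 u with hu | hu <;> rcases le_total 0 v with hv | hv
  · -- both nonneg
    rw [sign_mul_abs_rpow_of_nonneg hp hu, sign_mul_abs_rpow_of_nonneg hp hv,
      abs_of_nonneg hu, abs_of_nonneg hv,
      abs_of_nonneg (by positivity : (0:ℝ) ≤ u ^ p + v ^ p),
      abs_of_nonneg (by linarith : (0:ℝ) ≤ u + v)]
    exact same_sign_core hp hu hv
  · -- u nonneg, v nonpos
    rw [sign_mul_abs_rpow_of_nonneg hp hu, sign_mul_abs_rpow_of_nonpos hp hv,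
      abs_of_nonneg hu, abs_of_nonpos hv]
    have h := abs_diff_core hp hu (by linarith : (0:ℝ) ≤ -v)
    rw [sub_neg_eq_add] at h
    calc |u ^ p + -((-v) ^ p)| = |u ^ p - (-v) ^ p| := by ring_nf
      _ ≤ p * |u + v| * ((u ^ p + (-v) ^ p)/2) ^ ((p-1)/p) := h
  · -- u nonpos, v nonneg
    rw [sign_mul_abs_rpow_of_nonpos hp hu, sign_mul_abs_rpow_of_nonneg hp hv,
      abs_of_nonpos hu, abs_of_nonneg hv]
    have h := abs_diff_core hp hv (by linarith : (0:ℝ) ≤ -u)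
    rw [sub_neg_eq_add] at h
    calc |-((-u) ^ p) + v ^ p| = |v ^ p - (-u) ^ p| := by ring_nf
      _ ≤ p * |v + u| * ((v ^ p + (-u) ^ p)/2) ^ ((p-1)/p) := h
      _ = p * |u + v| * (((-u) ^ p + v ^ p)/2) ^ ((p-1)/p) := by
          rw [add_comm v u, add_comm (v ^ p)]
  · -- both nonpos
    rw [sign_mul_abs_rpow_of_nonpos hp hu, sign_mul_abs_rpow_of_nonpos hp hv,
      abs_of_nonpos hu, abs_of_nonpos hv]
    have h := same_sign_core hp (by linarith : (0:ℝ) ≤ -u) (by linarith : (0:ℝ) ≤ -v)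
    calc |-((-u) ^ p) + -((-v) ^ p)| = (-u) ^ p + (-v) ^ p := by
          rw [← neg_add, abs_neg, abs_of_nonneg (add_nonneg (Real.rpow_nonneg (by linarith) _) (Real.rpow_nonneg (by linarith) _))]
      _ ≤ p * (-u + -v) * (((-u) ^ p + (-v) ^ p)/2) ^ ((p-1)/p) := h
      _ = p * |u + v| * (((-u) ^ p + (-v) ^ p)/2) ^ ((p-1)/p) := by
          rw [abs_of_nonpos (by linarith : u + v ≤ 0)]
          ring_nf

end EdgeCore

section IndicatorIntegrals
open Real Set MeasureTheory

private lemma ind_lt_eq (c : ℝ) :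
    (fun s : ℝ => if s < c then (1:ℝ) else 0) = (Set.Iio c).indicator (fun _ => (1:ℝ)) := by
  funext s; simp [Set.indicator_apply]

private lemma integrable_ind_lt (c : ℝ) :
    IntegrableOn (fun s : ℝ => if s < c then (1:ℝ) else 0) (Set.Ioi 0) := by
  rw [ind_lt_eq, IntegrableOn, integrable_indicator_iff measurableSet_Iio, IntegrableOn,
    Measure.restrict_restrict measurableSet_Iio]
  refine (integrableOn_const_iff).mpr (Or.inr ?_)
  calc volume (Set.Iio c ∩ Set.Ioi 0) ≤ volume (Set.Iio c ∩ Set.Ioi 0 : Set ℝ) := le_rfl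
    _ < ⊤ := by
        rw [Set.inter_comm, Set.Ioi_inter_Iio, Real.volume_Ioo]
        exact ENNReal.ofReal_lt_top

private lemma integral_ind_lt {c : ℝ} (hc : 0 ≤ c) :
    (∫ s in Set.Ioi (0:ℝ), (if s < c then (1:ℝ) else 0)) = c := by
  rw [ind_lt_eq, MeasureTheory.setIntegral_indicator measurableSet_Iio,
    MeasureTheory.setIntegral_const, Set.Ioi_inter_Iio, measureReal_def, Real.volume_Ioo, smul_eq_mul, mul_one,
    sub_zero, ENNReal.toReal_ofReal hc]

private lemma ind_Ico_eq (b c : ℝ) :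
    (fun s : ℝ => if b ≤ s ∧ s < c then (1:ℝ) else 0)
      = (Set.Ico b c).indicator (fun _ => (1:ℝ)) := by
  funext s; simp [Set.indicator_apply, Set.mem_Ico]

private lemma integrable_ind_Ico (b c : ℝ) :
    IntegrableOn (fun s : ℝ => if b ≤ s ∧ s < c then (1:ℝ) else 0) (Set.Ioi 0) := by
  rw [ind_Ico_eq, IntegrableOn, integrable_indicator_iff measurableSet_Ico, IntegrableOn,
    Measure.restrict_restrict measurableSet_Ico]
  refine (integrableOn_const_iff).mpr (Or.inr ?_)
  calc volume (Set.Ico b c ∩ Set.Ioi 0) ≤ volume (Set.Ico b c : Set ℝ) :=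
        measure_mono Set.inter_subset_left
    _ < ⊤ := by rw [Real.volume_Ico]; exact ENNReal.ofReal_lt_top

private lemma integral_ind_Ico {b c : ℝ} (hb : 0 ≤ b) (hbc : b ≤ c) :
    (∫ s in Set.Ioi (0:ℝ), (if b ≤ s ∧ s < c then (1:ℝ) else 0)) = c - b := by
  rw [ind_Ico_eq, MeasureTheory.setIntegral_indicator measurableSet_Ico,
    MeasureTheory.setIntegral_const, smul_eq_mul, mul_one]
  have hvol : volume (Set.Ioi (0:ℝ) ∩ Set.Ico b c) = ENNReal.ofReal (c - b) := by
    rcases eq_or_lt_of_le hb with rfl | hb'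
    · have : Set.Ioi (0:ℝ) ∩ Set.Ico 0 c = Set.Ioo 0 c := by
        ext s
        simp only [Set.mem_inter_iff, Set.mem_Ioi, Set.mem_Ico, Set.mem_Ioo]
        constructor
        · rintro ⟨h1, _, h3⟩; exact ⟨h1, h3⟩
        · rintro ⟨h1, h3⟩; exact ⟨h1, h1.le, h3⟩
      rw [this, Real.volume_Ioo, sub_zero]
    · have : Set.Ioi (0:ℝ) ∩ Set.Ico b c = Set.Ico b c := by
        apply Set.inter_eq_right.mpr
        intro s hs
        exact lt_of_lt_of_le hb' hs.1
      rw [this, Real.volume_Ico]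
  rw [measureReal_def, hvol, ENNReal.toReal_ofReal (by linarith)]

end IndicatorIntegrals

section PerEdge
open Real Set MeasureTheory Classical

private lemma cond_fun_eq (c1 c2 : ℝ) (P1 P2 : Prop) :
    (fun s : ℝ => if (s < c1 ∧ P1) ∧ (s < c2 ∧ P2) then (1:ℝ) else 0)
      = if P1 ∧ P2 then (fun s : ℝ => if s < min c1 c2 then (1:ℝ) else 0)
        else (fun _ : ℝ => (0:ℝ)) := by
  by_cases h : P1 ∧ P2
  · rw [if_pos h]
    funext s
    refine if_congr ?_ rfl rfl
    constructor
    · rintro ⟨⟨hs1, _⟩, ⟨hs2, _⟩⟩; exact lt_min hs1 hs2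
    · intro hs; exact ⟨⟨(lt_min_iff.mp hs).1, h.1⟩, ⟨(lt_min_iff.mp hs).2, h.2⟩⟩
  · rw [if_neg h]
    funext s
    rw [if_neg (by tauto)]

private lemma sign_combine {p : ℝ} (hp : 1 ≤ p) (xi xj : ℝ) :
    2 * (if 0 < xi ∧ 0 < xj then min (|xi|^p) (|xj|^p) else 0)
      + 2 * (if xi < 0 ∧ xj < 0 then min (|xi|^p) (|xj|^p) else 0)
      + (max (|xi|^p) (|xj|^p) - min (|xi|^p) (|xj|^p))
      = |Real.sign xi * |xi|^p + Real.sign xj * |xj|^p| := by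
  have hp0 : p ≠ 0 := by intro h; rw [h] at hp; norm_num at hp
  set A := |xi|^p with hAdef
  set B := |xj|^p with hBdef
  have hA : (0:ℝ) ≤ A := Real.rpow_nonneg (abs_nonneg _) _
  have hB : (0:ℝ) ≤ B := Real.rpow_nonneg (abs_nonneg _) _
  have hA0 : xi = 0 → A = 0 := fun h => by rw [hAdef, h, abs_zero, Real.zero_rpow hp0]
  have hB0 : xj = 0 → B = 0 := fun h => by rw [hBdef, h, abs_zero, Real.zero_rpow hp0]
  rcases lt_trichotomy xi 0 with hxi | hxi | hxi <;>
    rcases lt_trichotomy xj 0 with hxj | hxj | hxj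
  · -- both neg
    rw [if_neg (by rintro ⟨h1, _⟩; linarith), if_pos ⟨hxi, hxj⟩,
      Real.sign_of_neg hxi, Real.sign_of_neg hxj]
    have e : (-1) * A + (-1) * B = -(A + B) := by ring
    rw [e, abs_neg, abs_of_nonneg (add_nonneg hA hB)]
    linarith [min_add_max A B]
  · -- xi < 0, xj = 0
    rw [if_neg (by rintro ⟨_, h⟩; linarith), if_neg (by rintro ⟨_, h⟩; linarith),
      Real.sign_of_neg hxi, hxj, Real.sign_zero, hB0 hxj,
      min_eq_right hA, max_eq_left hA]
    have e : (-1) * A + 0 * (0:ℝ) = -A := by ring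
    rw [e, abs_neg, abs_of_nonneg hA]
    ring
  · -- xi < 0 < xj
    rw [if_neg (by rintro ⟨h1, _⟩; linarith), if_neg (by rintro ⟨_, h⟩; linarith),
      Real.sign_of_neg hxi, Real.sign_of_pos hxj, max_sub_min_eq_abs]
    have e : (-1) * A + 1 * B = -(A - B) := by ring
    rw [e, abs_neg, abs_sub_comm A B]
    ring
  · -- xi = 0, xj < 0
    rw [if_neg (by rintro ⟨h, _⟩; linarith), if_neg (by rintro ⟨h, _⟩; linarith),
      hxi, Real.sign_zero, Real.sign_of_neg hxj, hA0 hxi,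
      min_eq_left hB, max_eq_right hB]
    have e : (0:ℝ) * 0 + (-1) * B = -B := by ring
    rw [e, abs_neg, abs_of_nonneg hB]
    ring
  · -- both zero
    rw [if_neg (by rintro ⟨h, _⟩; linarith), if_neg (by rintro ⟨h, _⟩; linarith),
      hxi, hxj, Real.sign_zero, hA0 hxi, hB0 hxj]
    simp
  · -- xi = 0 < xj
    rw [if_neg (by rintro ⟨h, _⟩; linarith), if_neg (by rintro ⟨h, _⟩; linarith),
      hxi, Real.sign_zero, Real.sign_of_pos hxj, hA0 hxi,
      min_eq_left hB, max_eq_right hB]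
    have e : (0:ℝ) * 0 + 1 * B = B := by ring
    rw [e, abs_of_nonneg hB]
    ring
  · -- 0 < xi, xj < 0
    rw [if_neg (by rintro ⟨_, h⟩; linarith), if_neg (by rintro ⟨h, _⟩; linarith),
      Real.sign_of_pos hxi, Real.sign_of_neg hxj, max_sub_min_eq_abs]
    have e : (1:ℝ) * A + (-1) * B = A - B := by ring
    rw [e]
    norm_num [abs_sub_comm]
  · -- 0 < xi, xj = 0
    rw [if_neg (by rintro ⟨_, h⟩; linarith), if_neg (by rintro ⟨_, h⟩; linarith),
      Real.sign_of_pos hxi, hxj, Real.sign_zero, hB0 hxj,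
      min_eq_right hA, max_eq_left hA]
    have e : (1:ℝ) * A + 0 * (0:ℝ) = A := by ring
    rw [e, abs_of_nonneg hA]
    ring
  · -- both pos
    rw [if_pos ⟨hxi, hxj⟩, if_neg (by rintro ⟨h1, _⟩; linarith),
      Real.sign_of_pos hxi, Real.sign_of_pos hxj]
    have e : (1:ℝ) * A + 1 * B = A + B := by ring
    rw [e, abs_of_nonneg (add_nonneg hA hB)]
    linarith [min_add_max A B]

private lemma edge_integral {p : ℝ} (hp : 1 ≤ p) (xi xj : ℝ) (Q1 Q2 Q3 : ℝ → Prop)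
    [∀ s : ℝ, Decidable (Q1 s)] [∀ s : ℝ, Decidable (Q2 s)] [∀ s : ℝ, Decidable (Q3 s)]
    (h1 : ∀ s, Q1 s ↔ ((s < |xi|^p ∧ 0 < xi) ∧ (s < |xj|^p ∧ 0 < xj)))
    (h2 : ∀ s, Q2 s ↔ ((s < |xi|^p ∧ xi < 0) ∧ (s < |xj|^p ∧ xj < 0)))
    (h3 : ∀ s, Q3 s ↔ (min (|xi|^p) (|xj|^p) ≤ s ∧ s < max (|xi|^p) (|xj|^p))) :
    IntegrableOn (fun s : ℝ =>
        2 * (if Q1 s then (1:ℝ) else 0) + 2 * (if Q2 s then (1:ℝ) else 0)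
          + (if Q3 s then (1:ℝ) else 0)) (Set.Ioi 0)
    ∧ (∫ s in Set.Ioi (0:ℝ),
        (2 * (if Q1 s then (1:ℝ) else 0) + 2 * (if Q2 s then (1:ℝ) else 0)
          + (if Q3 s then (1:ℝ) else 0)))
      = |Real.sign xi * |xi|^p + Real.sign xj * |xj|^p| := by
  have hA : (0:ℝ) ≤ |xi|^p := Real.rpow_nonneg (abs_nonneg _) _
  have hB : (0:ℝ) ≤ |xj|^p := Real.rpow_nonneg (abs_nonneg _) _
  have hmin : (0:ℝ) ≤ min (|xi|^p) (|xj|^p) := le_min hA hB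
  have hminmax : min (|xi|^p) (|xj|^p) ≤ max (|xi|^p) (|xj|^p) := min_le_max
  have e1 : (fun s : ℝ => if Q1 s then (1:ℝ) else 0)
      = if 0 < xi ∧ 0 < xj then (fun s : ℝ => if s < min (|xi|^p) (|xj|^p) then (1:ℝ) else 0)
        else (fun _ : ℝ => (0:ℝ)) := by
    rw [← cond_fun_eq (|xi|^p) (|xj|^p) (0 < xi) (0 < xj)]
    funext s
    exact if_congr (h1 s) rfl rfl
  have e2 : (fun s : ℝ => if Q2 s then (1:ℝ) else 0)
      = if xi < 0 ∧ xj < 0 then (fun s : ℝ => if s < min (|xi|^p) (|xj|^p) then (1:ℝ) else 0)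
        else (fun _ : ℝ => (0:ℝ)) := by
    rw [← cond_fun_eq (|xi|^p) (|xj|^p) (xi < 0) (xj < 0)]
    funext s
    exact if_congr (h2 s) rfl rfl
  have e3 : (fun s : ℝ => if Q3 s then (1:ℝ) else 0)
      = fun s : ℝ => if min (|xi|^p) (|xj|^p) ≤ s ∧ s < max (|xi|^p) (|xj|^p) then (1:ℝ) else 0 := by
    funext s
    exact if_congr (h3 s) rfl rfl
  have int1 : IntegrableOn (fun s : ℝ => if Q1 s then (1:ℝ) else 0) (Set.Ioi 0) := by
    rw [e1]
    by_cases h : 0 < xi ∧ 0 < xj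
    · rw [if_pos h]; exact integrable_ind_lt _
    · rw [if_neg h]; exact integrableOn_zero
  have int2 : IntegrableOn (fun s : ℝ => if Q2 s then (1:ℝ) else 0) (Set.Ioi 0) := by
    rw [e2]
    by_cases h : xi < 0 ∧ xj < 0
    · rw [if_pos h]; exact integrable_ind_lt _
    · rw [if_neg h]; exact integrableOn_zero
  have int3 : IntegrableOn (fun s : ℝ => if Q3 s then (1:ℝ) else 0) (Set.Ioi 0) := by
    rw [e3]; exact integrable_ind_Ico _ _
  have val1 : (∫ s in Set.Ioi (0:ℝ), (if Q1 s then (1:ℝ) else 0))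
      = if 0 < xi ∧ 0 < xj then min (|xi|^p) (|xj|^p) else 0 := by
    rw [e1]
    by_cases h : 0 < xi ∧ 0 < xj
    · rw [if_pos h, if_pos h]; exact integral_ind_lt hmin
    · rw [if_neg h, if_neg h]; exact integral_zero _ _
  have val2 : (∫ s in Set.Ioi (0:ℝ), (if Q2 s then (1:ℝ) else 0))
      = if xi < 0 ∧ xj < 0 then min (|xi|^p) (|xj|^p) else 0 := by
    rw [e2]
    by_cases h : xi < 0 ∧ xj < 0
    · rw [if_pos h, if_pos h]; exact integral_ind_lt hmin
    · rw [if_neg h, if_neg h]; exact integral_zero _ _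
  have val3 : (∫ s in Set.Ioi (0:ℝ), (if Q3 s then (1:ℝ) else 0))
      = max (|xi|^p) (|xj|^p) - min (|xi|^p) (|xj|^p) := by
    rw [e3]; exact integral_ind_Ico hmin hminmax
  have c1 : IntegrableOn (fun s : ℝ => 2 * (if Q1 s then (1:ℝ) else 0)) (Set.Ioi 0) :=
    int1.const_mul 2
  have c2 : IntegrableOn (fun s : ℝ => 2 * (if Q2 s then (1:ℝ) else 0)) (Set.Ioi 0) :=
    int2.const_mul 2
  have c12 : IntegrableOn
      (fun s : ℝ => 2 * (if Q1 s then (1:ℝ) else 0) + 2 * (if Q2 s then (1:ℝ) else 0))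
      (Set.Ioi 0) := c1.add c2
  constructor
  · exact c12.add int3
  · rw [MeasureTheory.integral_add c12 int3, MeasureTheory.integral_add c1 c2,
      MeasureTheory.integral_const_mul, MeasureTheory.integral_const_mul, val1, val2, val3]
    exact sign_combine hp xi xj

end PerEdge

section Handshake

private lemma sum_lift_add {V : Type*} [Fintype V] [DecidableEq V] (G : SimpleGraph V)
    [Fintype G.edgeSet] [DecidableRel G.Adj] (f : V → ℝ) :
    ∑ e ∈ G.edgeFinset, Sym2.lift ⟨fun i j => f i + f j, fun i j => add_comm (f i) (f j)⟩ e
      = ∑ v, (G.degree v : ℝ) * f v := by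
  classical
  have key : ∀ e ∈ G.edgeFinset,
      Sym2.lift ⟨fun i j => f i + f j, fun i j => add_comm (f i) (f j)⟩ e
        = ∑ v, if v ∈ e then f v else 0 := by
    intro e he
    revert he
    induction e using Sym2.ind with
    | _ i j =>
      intro he
      have hadj : G.Adj i j := by rwa [SimpleGraph.mem_edgeFinset, SimpleGraph.mem_edgeSet] at he
      have hne : i ≠ j := hadj.ne
      rw [Sym2.lift_mk]
      have h1 : (∑ v, if v ∈ (s(i,j) : Sym2 V) then f v else 0)
          = ∑ v ∈ Finset.univ.filter (fun v => v ∈ (s(i,j) : Sym2 V)), f v :=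
        (Finset.sum_filter _ _).symm
      have hfil : Finset.univ.filter (fun v => v ∈ (s(i,j) : Sym2 V)) = {i, j} := by
        ext v; simp [Sym2.mem_iff]
      rw [h1, hfil, Finset.sum_pair hne]
  rw [Finset.sum_congr rfl key, Finset.sum_comm]
  refine Finset.sum_congr rfl fun v _ => ?_
  rw [← Finset.sum_filter, Finset.sum_const]
  have : (G.edgeFinset.filter fun e => v ∈ e) = G.incidenceFinset v :=
    (SimpleGraph.incidenceFinset_eq_filter G v).symm
  rw [this, SimpleGraph.card_incidenceFinset_eq_degree, nsmul_eq_mul]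

end Handshake

section Coarea

open Real Set MeasureTheory

variable {V : Type*}

open Classical in
private noncomputable def SfD [Fintype V] (x : V → ℝ) (p s : ℝ) : Finset V :=
  univ.filter fun i => s < |x i| ^ p ∧ 0 < x i

open Classical in
private noncomputable def TfD [Fintype V] (x : V → ℝ) (p s : ℝ) : Finset V :=
  univ.filter fun i => s < |x i| ^ p ∧ x i < 0

open Classical in
private noncomputable def UfD [Fintype V] (x : V → ℝ) (p s : ℝ) : Finset V :=
  univ.filter fun i => s < |x i| ^ p

private lemma SfD_union [Fintype V] [DecidableEq V] (x : V → ℝ) {p s : ℝ} (hp0 : p ≠ 0) (hs : 0 ≤ s) :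
    SfD x p s ∪ TfD x p s = UfD x p s := by
  classical
  ext i
  simp only [SfD, TfD, UfD, Finset.mem_union, Finset.mem_filter, Finset.mem_univ, true_and]
  constructor
  · rintro (⟨h1, _⟩ | ⟨h1, _⟩) <;> exact h1
  · intro h1
    rcases lt_trichotomy (x i) 0 with hx0 | hx0 | hx0
    · exact Or.inr ⟨h1, hx0⟩
    · exfalso
      rw [hx0, abs_zero, Real.zero_rpow hp0] at h1
      linarith
    · exact Or.inl ⟨h1, hx0⟩

private lemma SfD_disjoint [Fintype V] (x : V → ℝ) (p s : ℝ) :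
    Disjoint (SfD x p s) (TfD x p s) := by
  classical
  rw [Finset.disjoint_left]
  intro i hi1 hi2
  simp only [SfD, TfD, Finset.mem_filter, Finset.mem_univ, true_and] at hi1 hi2
  linarith [hi1.2, hi2.2]

private lemma eIn_empty [Fintype V] (G : SimpleGraph V) [Fintype G.edgeSet] :
    eIn G (∅ : Finset V) = 0 := by
  classical
  apply Finset.card_eq_zero.mpr
  rw [Finset.filter_eq_empty_iff]
  intro e he
  revert he
  induction e using Sym2.ind with
  | _ i j =>
    intro _ hcon
    exact absurd (hcon i (Sym2.mem_mk_left i j)) (by simp)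

private lemma cutN_empty [Fintype V] (G : SimpleGraph V) [Fintype G.edgeSet] :
    cutN G (∅ : Finset V) = 0 := by
  classical
  apply Finset.card_eq_zero.mpr
  rw [Finset.filter_eq_empty_iff]
  intro e _
  rintro ⟨⟨v, _, hv⟩, -⟩
  simp at hv

private lemma psi_nonneg_lb [Fintype V] [DecidableEq V] (G : SimpleGraph V) [Fintype G.edgeSet] :
    ∀ r ∈ {r : ℝ | ∃ S T : Finset V, Disjoint S T ∧ (S ∪ T).Nonempty ∧
      r = (2 * eIn G S + 2 * eIn G T + cutN G (S ∪ T)) / (S ∪ T).card}, 0 ≤ r := by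
  rintro r ⟨S, T, -, -, rfl⟩
  positivity

private lemma psi_bddBelow [Fintype V] [DecidableEq V] (G : SimpleGraph V) [Fintype G.edgeSet] :
    BddBelow {r : ℝ | ∃ S T : Finset V, Disjoint S T ∧ (S ∪ T).Nonempty ∧
      r = (2 * eIn G S + 2 * eIn G T + cutN G (S ∪ T)) / (S ∪ T).card} :=
  ⟨0, psi_nonneg_lb G⟩

private lemma pointwise_bound [Fintype V] [DecidableEq V] (G : SimpleGraph V)
    [Fintype G.edgeSet] (x : V → ℝ) {p s : ℝ} (hp0 : p ≠ 0) (hs : 0 ≤ s) :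
    psi G * ((UfD x p s).card : ℝ)
      ≤ 2 * (eIn G (SfD x p s) : ℝ) + 2 * (eIn G (TfD x p s) : ℝ) + (cutN G (UfD x p s) : ℝ) := by
  classical
  rcases Finset.eq_empty_or_nonempty (UfD x p s) with hU | hU
  · have hun := SfD_union x hp0 hs
    rw [hU] at hun
    have hS : SfD x p s = ∅ := (Finset.union_eq_empty.mp hun).1
    have hT : TfD x p s = ∅ := (Finset.union_eq_empty.mp hun).2
    rw [hU, hS, hT, eIn_empty, cutN_empty]
    simp
  · have hmem : (2 * (eIn G (SfD x p s) : ℝ) + 2 * (eIn G (TfD x p s) : ℝ)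
        + (cutN G (UfD x p s) : ℝ)) / ((UfD x p s).card : ℝ)
        ∈ {r : ℝ | ∃ S T : Finset V, Disjoint S T ∧ (S ∪ T).Nonempty ∧
          r = (2 * eIn G S + 2 * eIn G T + cutN G (S ∪ T)) / (S ∪ T).card} := by
      refine ⟨SfD x p s, TfD x p s, SfD_disjoint x p s, ?_, ?_⟩
      · rw [SfD_union x hp0 hs]; exact hU
      · rw [SfD_union x hp0 hs]
    have h1 : psi G ≤ (2 * (eIn G (SfD x p s) : ℝ) + 2 * (eIn G (TfD x p s) : ℝ)
        + (cutN G (UfD x p s) : ℝ)) / ((UfD x p s).card : ℝ) := csInf_le (psi_bddBelow G) hmem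
    have hcpos : (0:ℝ) < ((UfD x p s).card : ℝ) := by
      exact_mod_cast Finset.card_pos.mpr hU
    calc psi G * ((UfD x p s).card : ℝ)
        ≤ ((2 * (eIn G (SfD x p s) : ℝ) + 2 * (eIn G (TfD x p s) : ℝ)
            + (cutN G (UfD x p s) : ℝ)) / ((UfD x p s).card : ℝ)) * ((UfD x p s).card : ℝ) :=
          mul_le_mul_of_nonneg_right h1 hcpos.le
      _ = _ := div_mul_cancel₀ _ hcpos.ne'

end Coarea

section CoareaMain

open Real Set MeasureTheory

variable {V : Type*}

private lemma coarea [Fintype V] [DecidableEq V] (G : SimpleGraph V) [Fintype G.edgeSet]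
    [DecidableRel G.Adj] {p : ℝ} (hp : 1 ≤ p) (x : V → ℝ) (hx1 : ∑ i, |x i| ^ p = 1) :
    psi G ≤ ∑ e ∈ G.edgeFinset,
      Sym2.lift ⟨fun i j => |Real.sign (x i) * |x i| ^ p + Real.sign (x j) * |x j| ^ p|,
        fun i j => by simp [add_comm]⟩ e := by
  classical
  have hp0 : (0:ℝ) < p := lt_of_lt_of_le one_pos hp
  have hcard : ∀ s : ℝ, ((UfD x p s).card : ℝ) = ∑ i, (if s < |x i| ^ p then (1:ℝ) else 0) := by
    intro s
    simp only [UfD, Finset.card_filter]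
    push_cast
    exact Finset.sum_congr rfl fun i _ => if_congr Iff.rfl rfl rfl
  have hintU : IntegrableOn (fun s : ℝ => ∑ i, (if s < |x i| ^ p then (1:ℝ) else 0))
      (Set.Ioi 0) :=
    MeasureTheory.integrable_finset_sum _ fun i _ => integrable_ind_lt _
  have hvalU : (∫ s in Set.Ioi (0:ℝ), ∑ i, (if s < |x i| ^ p then (1:ℝ) else 0)) = 1 := by
    rw [MeasureTheory.integral_finset_sum _ fun i _ => integrable_ind_lt _,
      Finset.sum_congr rfl fun i _ => integral_ind_lt (Real.rpow_nonneg (abs_nonneg (x i)) p)]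
    exact hx1
  have hedge : ∀ e ∈ G.edgeFinset,
      IntegrableOn (fun s : ℝ =>
        2 * (if (∀ v ∈ e, v ∈ SfD x p s) then (1:ℝ) else 0)
          + 2 * (if (∀ v ∈ e, v ∈ TfD x p s) then (1:ℝ) else 0)
          + (if ((∃ v ∈ e, v ∈ UfD x p s) ∧ (∃ w ∈ e, w ∉ UfD x p s)) then (1:ℝ) else 0))
        (Set.Ioi 0)
      ∧ (∫ s in Set.Ioi (0:ℝ),
          (2 * (if (∀ v ∈ e, v ∈ SfD x p s) then (1:ℝ) else 0)
            + 2 * (if (∀ v ∈ e, v ∈ TfD x p s) then (1:ℝ) else 0)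
            + (if ((∃ v ∈ e, v ∈ UfD x p s) ∧ (∃ w ∈ e, w ∉ UfD x p s)) then (1:ℝ) else 0)))
        = Sym2.lift ⟨fun i j => |Real.sign (x i) * |x i| ^ p + Real.sign (x j) * |x j| ^ p|,
            fun i j => by simp [add_comm]⟩ e := by
    intro e he
    revert he
    induction e using Sym2.ind with
    | _ i j =>
      intro _he
      rw [Sym2.lift_mk]
      have hQ1 : ∀ s : ℝ, (∀ v ∈ (s(i,j) : Sym2 V), v ∈ SfD x p s) ↔
          ((s < |x i| ^ p ∧ 0 < x i) ∧ (s < |x j| ^ p ∧ 0 < x j)) := by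
        intro s
        rw [Sym2.ball]
        simp [SfD]
      have hQ2 : ∀ s : ℝ, (∀ v ∈ (s(i,j) : Sym2 V), v ∈ TfD x p s) ↔
          ((s < |x i| ^ p ∧ x i < 0) ∧ (s < |x j| ^ p ∧ x j < 0)) := by
        intro s
        rw [Sym2.ball]
        simp [TfD]
      have hmemU : ∀ (s : ℝ) (v : V), v ∈ UfD x p s ↔ s < |x v| ^ p := by
        intro s v; simp [UfD]
      have hQ3 : ∀ s : ℝ, ((∃ v ∈ (s(i,j) : Sym2 V), v ∈ UfD x p s) ∧
          (∃ w ∈ (s(i,j) : Sym2 V), w ∉ UfD x p s)) ↔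
          (min (|x i| ^ p) (|x j| ^ p) ≤ s ∧ s < max (|x i| ^ p) (|x j| ^ p)) := by
        intro s
        constructor
        · rintro ⟨⟨v, hv, hvU⟩, ⟨w, hw, hwU⟩⟩
          rw [Sym2.mem_iff] at hv hw
          constructor
          · rw [min_le_iff]
            rcases hw with rfl | rfl
            · exact Or.inl (not_lt.mp fun hc => hwU ((hmemU s w).mpr hc))
            · exact Or.inr (not_lt.mp fun hc => hwU ((hmemU s w).mpr hc))
          · rw [lt_max_iff]
            rcases hv with rfl | rfl
            · exact Or.inl ((hmemU s v).mp hvU)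
            · exact Or.inr ((hmemU s v).mp hvU)
        · rintro ⟨h1, h2⟩
          constructor
          · rcases lt_max_iff.mp h2 with h | h
            · exact ⟨i, Sym2.mem_mk_left i j, (hmemU s i).mpr h⟩
            · exact ⟨j, Sym2.mem_mk_right i j, (hmemU s j).mpr h⟩
          · rcases min_le_iff.mp h1 with h | h
            · exact ⟨i, Sym2.mem_mk_left i j,
                fun hc => absurd ((hmemU s i).mp hc) (not_lt.mpr h)⟩
            · exact ⟨j, Sym2.mem_mk_right i j,
                fun hc => absurd ((hmemU s j).mp hc) (not_lt.mpr h)⟩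
      exact edge_integral hp (x i) (x j) _ _ _ hQ1 hQ2 hQ3
  have hrep : ∀ s : ℝ,
      2 * (eIn G (SfD x p s) : ℝ) + 2 * (eIn G (TfD x p s) : ℝ) + (cutN G (UfD x p s) : ℝ)
        = ∑ e ∈ G.edgeFinset,
          (2 * (if (∀ v ∈ e, v ∈ SfD x p s) then (1:ℝ) else 0)
            + 2 * (if (∀ v ∈ e, v ∈ TfD x p s) then (1:ℝ) else 0)
            + (if ((∃ v ∈ e, v ∈ UfD x p s) ∧ (∃ w ∈ e, w ∉ UfD x p s)) then (1:ℝ) else 0)) := by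
    intro s
    unfold eIn cutN
    rw [Finset.card_filter, Finset.card_filter, Finset.card_filter]
    push_cast
    rw [Finset.mul_sum, Finset.mul_sum, ← Finset.sum_add_distrib, ← Finset.sum_add_distrib]
  have hintF : IntegrableOn (fun s : ℝ => ∑ e ∈ G.edgeFinset,
      (2 * (if (∀ v ∈ e, v ∈ SfD x p s) then (1:ℝ) else 0)
        + 2 * (if (∀ v ∈ e, v ∈ TfD x p s) then (1:ℝ) else 0)
        + (if ((∃ v ∈ e, v ∈ UfD x p s) ∧ (∃ w ∈ e, w ∉ UfD x p s)) then (1:ℝ) else 0)))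
      (Set.Ioi 0) :=
    MeasureTheory.integrable_finset_sum _ fun e he => (hedge e he).1
  calc psi G = psi G * 1 := (mul_one _).symm
    _ = psi G * ∫ s in Set.Ioi (0:ℝ), ∑ i, (if s < |x i| ^ p then (1:ℝ) else 0) := by
        rw [hvalU]
    _ = ∫ s in Set.Ioi (0:ℝ), psi G * ∑ i, (if s < |x i| ^ p then (1:ℝ) else 0) :=
        (MeasureTheory.integral_const_mul _ _).symm
    _ ≤ ∫ s in Set.Ioi (0:ℝ), ∑ e ∈ G.edgeFinset,
          (2 * (if (∀ v ∈ e, v ∈ SfD x p s) then (1:ℝ) else 0)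
            + 2 * (if (∀ v ∈ e, v ∈ TfD x p s) then (1:ℝ) else 0)
            + (if ((∃ v ∈ e, v ∈ UfD x p s) ∧ (∃ w ∈ e, w ∉ UfD x p s)) then (1:ℝ) else 0)) := by
        refine MeasureTheory.setIntegral_mono_on (hintU.const_mul _) hintF measurableSet_Ioi ?_
        intro s hs
        have hpb := pointwise_bound G x (ne_of_gt hp0) (le_of_lt hs)
        rw [hcard s, hrep s] at hpb
        exact hpb
    _ = ∑ e ∈ G.edgeFinset, ∫ s in Set.Ioi (0:ℝ),
          (2 * (if (∀ v ∈ e, v ∈ SfD x p s) then (1:ℝ) else 0)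
            + 2 * (if (∀ v ∈ e, v ∈ TfD x p s) then (1:ℝ) else 0)
            + (if ((∃ v ∈ e, v ∈ UfD x p s) ∧ (∃ w ∈ e, w ∉ UfD x p s)) then (1:ℝ) else 0)) :=
        MeasureTheory.integral_finset_sum _ fun e he => (hedge e he).1
    _ = ∑ e ∈ G.edgeFinset,
          Sym2.lift ⟨fun i j => |Real.sign (x i) * |x i| ^ p + Real.sign (x j) * |x j| ^ p|,
            fun i j => by simp [add_comm]⟩ e :=
        Finset.sum_congr rfl fun e he => (hedge e he).2

end CoareaMain

theorem stmt_3 [Fintype V] [DecidableEq V] (G : SimpleGraph V) [DecidableRel G.Adj]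
    (hE : G.edgeFinset.Nonempty) (p : ℝ) (hp : 1 ≤ p) :
    ((2 : ℝ) / G.maxDegree) ^ (p - 1) * (psi G / p) ^ p ≤ qp G p := by
  classical
  have hp0 : (0:ℝ) < p := lt_of_lt_of_le one_pos hp
  have hV : ∃ v w, G.Adj v w := by
    obtain ⟨e₀, he₀⟩ := hE
    revert he₀
    induction e₀ using Sym2.ind with
    | _ i j =>
      intro he₀
      exact ⟨i, j, by rwa [SimpleGraph.mem_edgeFinset, SimpleGraph.mem_edgeSet] at he₀⟩
  obtain ⟨v₀, w₀, hadj₀⟩ := hV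
  have hΔ : 0 < G.maxDegree := by
    refine lt_of_lt_of_le ?_ (G.degree_le_maxDegree v₀)
    rw [SimpleGraph.degree_pos_iff_exists_adj]
    exact ⟨w₀, hadj₀⟩
  have hDpos : (0:ℝ) < (G.maxDegree : ℝ) := by exact_mod_cast hΔ
  have hpsi0 : 0 ≤ psi G :=
    le_csInf ⟨_, ⟨{v₀}, ∅, Finset.disjoint_empty_right _, by simp, rfl⟩⟩ (psi_nonneg_lb G)
  have key : ∀ x : V → ℝ, unitSphere p x →
      ((2:ℝ) / (G.maxDegree : ℝ)) ^ (p - 1) * (psi G / p) ^ p ≤ Qp G p x := by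
    intro x hx
    have hx1 : ∑ i, |x i| ^ p = 1 := hx
    have hcoarea := coarea G hp x hx1
    have step2 : (∑ e ∈ G.edgeFinset,
        Sym2.lift ⟨fun i j => |Real.sign (x i) * |x i| ^ p + Real.sign (x j) * |x j| ^ p|,
          fun i j => by simp [add_comm]⟩ e)
        ≤ p * ∑ e ∈ G.edgeFinset,
          (Sym2.lift ⟨fun i j => |x i + x j|, fun i j => by simp [add_comm]⟩ e)
            * (Sym2.lift ⟨fun i j => ((|x i| ^ p + |x j| ^ p)/2) ^ ((p-1)/p),
                fun i j => by simp [add_comm]⟩ e) := by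
      rw [Finset.mul_sum]
      refine Finset.sum_le_sum fun e he => ?_
      clear he
      induction e using Sym2.ind with
      | _ i j =>
        simp only [Sym2.lift_mk]
        calc |Real.sign (x i) * |x i| ^ p + Real.sign (x j) * |x j| ^ p|
            ≤ p * |x i + x j| * ((|x i| ^ p + |x j| ^ p)/2) ^ ((p-1)/p) :=
              edge_core hp (x i) (x j)
          _ = p * (|x i + x j| * ((|x i| ^ p + |x j| ^ p)/2) ^ ((p-1)/p)) := by ring
    have hunn : ∀ e : Sym2 V,
        0 ≤ Sym2.lift ⟨fun i j => |x i + x j|, fun i j => by simp [add_comm]⟩ e :=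
      Sym2.ind fun i j => by rw [Sym2.lift_mk]; exact abs_nonneg _
    have hvnn : ∀ e : Sym2 V,
        0 ≤ Sym2.lift ⟨fun i j => ((|x i| ^ p + |x j| ^ p)/2) ^ ((p-1)/p),
          fun i j => by simp [add_comm]⟩ e :=
      Sym2.ind fun i j => by
        rw [Sym2.lift_mk]
        exact Real.rpow_nonneg (by positivity) _
    have hQeq : (∑ e ∈ G.edgeFinset,
        (Sym2.lift ⟨fun i j => |x i + x j|, fun i j => by simp [add_comm]⟩ e) ^ p)
        = Qp G p x := by
      unfold Qp
      refine Finset.sum_congr rfl fun e he => ?_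
      clear he
      induction e using Sym2.ind with
      | _ i j => simp only [Sym2.lift_mk]
    have hQ0 : 0 ≤ Qp G p x := by
      rw [← hQeq]
      exact Finset.sum_nonneg fun e _ => Real.rpow_nonneg (hunn e) p
    have hdeg : (∑ e ∈ G.edgeFinset,
        Sym2.lift ⟨fun i j => ((|x i| ^ p + |x j| ^ p)/2), fun i j => by simp [add_comm]⟩ e)
        ≤ (G.maxDegree : ℝ) / 2 := by
      have h1 : (∑ e ∈ G.edgeFinset,
          Sym2.lift ⟨fun i j => ((|x i| ^ p + |x j| ^ p)/2), fun i j => by simp [add_comm]⟩ e)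
          = (1/2) * ∑ e ∈ G.edgeFinset,
            Sym2.lift ⟨fun i j => (fun v => |x v| ^ p) i + (fun v => |x v| ^ p) j,
              fun i j => add_comm _ _⟩ e := by
        rw [Finset.mul_sum]
        refine Finset.sum_congr rfl fun e he => ?_
        clear he
        induction e using Sym2.ind with
        | _ i j =>
          simp only [Sym2.lift_mk]
          ring
      rw [h1, sum_lift_add G (fun v => |x v| ^ p)]
      have h2 : (∑ v, (G.degree v : ℝ) * |x v| ^ p) ≤ (G.maxDegree : ℝ) := by
        calc ∑ v, (G.degree v : ℝ) * |x v| ^ p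
            ≤ ∑ v, (G.maxDegree : ℝ) * |x v| ^ p :=
              Finset.sum_le_sum fun v _ => mul_le_mul_of_nonneg_right
                (by exact_mod_cast G.degree_le_maxDegree v) (Real.rpow_nonneg (abs_nonneg _) _)
          _ = (G.maxDegree : ℝ) * ∑ v, |x v| ^ p := (Finset.mul_sum _ _ _).symm
          _ = (G.maxDegree : ℝ) := by rw [hx1, mul_one]
      linarith
    rcases eq_or_lt_of_le hp with hp1 | hp1
    · -- p = 1
      subst hp1
      rw [sub_self, Real.rpow_zero, one_mul, div_one, Real.rpow_one]
      refine le_trans hcoarea (le_trans step2 ?_)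
      rw [one_mul, ← hQeq]
      refine le_of_eq (Finset.sum_congr rfl fun e he => ?_)
      clear he
      induction e using Sym2.ind with
      | _ i j =>
        simp only [Sym2.lift_mk]
        rw [sub_self, zero_div, Real.rpow_zero, mul_one, Real.rpow_one]
    · -- 1 < p
      have hps : (0:ℝ) < p - 1 := by linarith
      have hpq : p.HolderConjugate (p/(p-1)) :=
        (Real.holderConjugate_iff_eq_conjExponent hp1).mpr rfl
      have hHolder := Real.inner_le_Lp_mul_Lq_of_nonneg (s := G.edgeFinset) hpq
        (fun e _ => hunn e) (fun e _ => hvnn e)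
      have hveq : (∑ e ∈ G.edgeFinset,
          (Sym2.lift ⟨fun i j => ((|x i| ^ p + |x j| ^ p)/2) ^ ((p-1)/p),
            fun i j => by simp [add_comm]⟩ e) ^ (p/(p-1)))
          = ∑ e ∈ G.edgeFinset,
            Sym2.lift ⟨fun i j => ((|x i| ^ p + |x j| ^ p)/2),
              fun i j => by simp [add_comm]⟩ e := by
        refine Finset.sum_congr rfl fun e he => ?_
        clear he
        induction e using Sym2.ind with
        | _ i j =>
          simp only [Sym2.lift_mk]
          rw [← Real.rpow_mul (by positivity)]
          rw [show ((p-1)/p) * (p/(p-1)) = 1 from by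
            rw [div_mul_div_comm, mul_comm (p-1) p]
            exact div_self (mul_pos hp0 hps).ne', Real.rpow_one]
      have hsumv_nonneg : 0 ≤ ∑ e ∈ G.edgeFinset,
          (Sym2.lift ⟨fun i j => ((|x i| ^ p + |x j| ^ p)/2) ^ ((p-1)/p),
            fun i j => by simp [add_comm]⟩ e) ^ (p/(p-1)) :=
        Finset.sum_nonneg fun e _ => Real.rpow_nonneg (hvnn e) _
      have hsumv_le : (∑ e ∈ G.edgeFinset,
          (Sym2.lift ⟨fun i j => ((|x i| ^ p + |x j| ^ p)/2) ^ ((p-1)/p),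
            fun i j => by simp [add_comm]⟩ e) ^ (p/(p-1))) ≤ (G.maxDegree : ℝ)/2 := by
        rw [hveq]; exact hdeg
      have hfinal : psi G
          ≤ p * ((Qp G p x) ^ (1/p) * ((G.maxDegree : ℝ)/2) ^ ((p-1)/p)) := by
        refine le_trans hcoarea (le_trans step2 ?_)
        have h3 := hHolder
        rw [hQeq, one_div_div] at h3
        have h4 : (∑ e ∈ G.edgeFinset,
            (Sym2.lift ⟨fun i j => ((|x i| ^ p + |x j| ^ p)/2) ^ ((p-1)/p),
              fun i j => by simp [add_comm]⟩ e) ^ (p/(p-1))) ^ ((p-1)/p)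
            ≤ ((G.maxDegree : ℝ)/2) ^ ((p-1)/p) :=
          Real.rpow_le_rpow hsumv_nonneg hsumv_le (div_nonneg hps.le hp0.le)
        have h5 := le_trans h3 (mul_le_mul_of_nonneg_left h4 (Real.rpow_nonneg hQ0 _))
        exact mul_le_mul_of_nonneg_left h5 hp0.le
      set D := ((G.maxDegree : ℝ)) with hDdef
      have hψp : (psi G) ^ p ≤ p ^ p * ((Qp G p x) * (D/2) ^ (p-1)) := by
        have h6 := Real.rpow_le_rpow hpsi0 hfinal hp0.le
        rw [Real.mul_rpow hp0.le
            (mul_nonneg (Real.rpow_nonneg hQ0 _) (Real.rpow_nonneg (by positivity) _)),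
          Real.mul_rpow (Real.rpow_nonneg hQ0 _) (Real.rpow_nonneg (by positivity) _),
          ← Real.rpow_mul hQ0,
          show (1/p) * p = 1 from by field_simp,
          Real.rpow_one,
          ← Real.rpow_mul (by positivity : (0:ℝ) ≤ D/2),
          show ((p-1)/p) * p = p - 1 from by field_simp] at h6
        exact h6
      rw [Real.div_rpow (by norm_num : (0:ℝ) ≤ 2) hDpos.le, Real.div_rpow hpsi0 hp0.le,
        div_mul_div_comm, div_le_iff₀ (by positivity)]
      have h7 : (D/2) ^ (p-1) = D ^ (p-1) / 2 ^ (p-1) :=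
        Real.div_rpow hDpos.le (by norm_num : (0:ℝ) ≤ 2) _
      rw [h7] at hψp
      have h8 : (0:ℝ) < 2 ^ (p-1) := Real.rpow_pos_of_pos two_pos _
      calc (2:ℝ) ^ (p-1) * (psi G) ^ p
          ≤ 2 ^ (p-1) * (p ^ p * ((Qp G p x) * (D ^ (p-1) / 2 ^ (p-1)))) :=
            mul_le_mul_of_nonneg_left hψp h8.le
        _ = Qp G p x * (D ^ (p-1) * p ^ p) := by
            field_simp
  have hSetNe : {r : ℝ | ∃ x : V → ℝ, unitSphere p x ∧ Qp G p x = r}.Nonempty := by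
    refine ⟨Qp G p (fun v => if v = v₀ then (1:ℝ) else 0),
      fun v => if v = v₀ then (1:ℝ) else 0, ?_, rfl⟩
    show (∑ i, |(if i = v₀ then (1:ℝ) else 0)| ^ p) = 1
    have hterm : ∀ i : V, |(if i = v₀ then (1:ℝ) else 0)| ^ p = if i = v₀ then (1:ℝ) else 0 := by
      intro i
      by_cases h : i = v₀
      · simp [h, Real.one_rpow]
      · simp [h, Real.zero_rpow (ne_of_gt hp0)]
    rw [Finset.sum_congr rfl fun i _ => hterm i]
    simp
  exact le_csInf hSetNe (by rintro r ⟨x, hxs, rfl⟩; exact key x hxs)
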